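/- Let n be a positive integer and let t, λ ∈ ℂ satisfy t^(n+1) = (n+1)·t − n, λⁿ = 1, and t·∑_{i=0}^{n−1} (λ·t)^i = n. Then λ = 1. -/

import Mathlib

/-- If `t^(n+1) = (n+1)·t − n`, `λⁿ = 1` and `t·∑_{i<n} (λ·t)^i = n` for a
positive integer `n`, then `λ = 1`. -/
theorem stmt_15 (n : ℕ) (hn : 0 < n) (t lam : ℂ)
    (ht : t ^ (n + 1) = ((n : ℂ) + 1) * t - (n : ℂ))
    (hlam : lam ^ n = 1)
    (he : t * ∑ i ∈ Finset.range n, (lam * t) ^ i = (n : ℂ)) :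
    lam = 1 := by
  have hnC : (n : ℂ) ≠ 0 := Nat.cast_ne_zero.mpr hn.ne'
  have ht0 : t ≠ 0 := by
    intro h
    rw [h, zero_mul] at he
    exact hnC he.symm
  by_cases h1 : lam * t = 1
  · -- sum of ones
    have hsum : ∑ i ∈ Finset.range n, (lam * t) ^ i = (n : ℂ) := by
      simp [h1]
    rw [hsum] at he
    have htt : t = 1 := by
      field_simp at he
      exact he
    rw [htt, mul_one] at h1
    exact h1
  · rw [geom_sum_eq h1] at he
    have hd : lam * t - 1 ≠ 0 := sub_ne_zero.mpr h1
    have key : t * ((lam * t) ^ n - 1) = (n : ℂ) * (lam * t - 1) := by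
      rw [← mul_div_assoc, div_eq_iff hd] at he
      linear_combination he
    have hpow : (lam * t) ^ n = t ^ n := by
      rw [mul_pow, hlam, one_mul]
    rw [hpow] at key
    -- t^(n+1) - t = n*lam*t - n
    have key2 : (n : ℂ) * t - (n : ℂ) - t + t = (n : ℂ) * (lam * t - 1) := by
      have : t * (t ^ n - 1) = t ^ (n + 1) - t := by ring
      calc (n : ℂ) * t - (n : ℂ) - t + t = t ^ (n+1) - t := by rw [ht]; ring
        _ = t * (t ^ n - 1) := by ring
        _ = (n : ℂ) * (lam * t - 1) := key
    have : (n : ℂ) * t = (n : ℂ) * (lam * t) := by linear_combination key2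
    have ht' : t = lam * t := mul_left_cancel₀ hnC this
    have : lam = 1 := by
      have := mul_right_cancel₀ ht0 (ht'.symm.trans (one_mul t).symm)
      exact this
    exact this
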